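/- Let A be a finite-dimensional quasitriangular Hopf algebra with R-matrix R satisfying the Yang–Baxter equation R₁₂R₁₃R₂₃ = R₂₃R₁₃R₁₂, and assume R is invertible in A ⊗ A^op (i.e., (id ⊗ S)(R) is a two-sided inverse of R in A ⊗ A^op). Then U_r U_l ⊆ U_l U_r, where U_l and U_r are the spans of left- and right-leg slices of R; hence U_R = U_l U_r is a subalgebra of A. -/

import Mathlib

open TensorProduct

section

variable (k : Type*) {A : Type*} [CommSemiring k] [Semiring A] [Bialgebra k A]

/-- The leg embedding `R ↦ R₁₂ = R ⊗ 1` of `A ⊗ A` into `(A ⊗ A) ⊗ A`. -/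
noncomputable def leg12 (R : A ⊗[k] A) : (A ⊗[k] A) ⊗[k] A := R ⊗ₜ[k] (1 : A)

/-- The leg embedding `R ↦ R₁₃` of `A ⊗ A` into `(A ⊗ A) ⊗ A`, `a ⊗ b ↦ (a ⊗ 1) ⊗ b`. -/
noncomputable def leg13 (R : A ⊗[k] A) : (A ⊗[k] A) ⊗[k] A :=
  Algebra.TensorProduct.map
    (Algebra.TensorProduct.includeLeft : A →ₐ[k] A ⊗[k] A) (AlgHom.id k A) R

/-- The leg embedding `R ↦ R₂₃` of `A ⊗ A` into `(A ⊗ A) ⊗ A`, `a ⊗ b ↦ (1 ⊗ a) ⊗ b`. -/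
noncomputable def leg23 (R : A ⊗[k] A) : (A ⊗[k] A) ⊗[k] A :=
  Algebra.TensorProduct.map
    (Algebra.TensorProduct.includeRight : A →ₐ[k] A ⊗[k] A) (AlgHom.id k A) R

/-- The span `U_l` of the left-leg slices `(ω ⊗ id)(R)`, `ω ∈ A*`. -/
noncomputable def Ul (R : A ⊗[k] A) : Submodule k A :=
  Submodule.span k {x : A | ∃ ω : Module.Dual k A,
    x = TensorProduct.lid k A (TensorProduct.map ω LinearMap.id R)}

/-- The span `U_r` of the right-leg slices `(id ⊗ η)(R)`, `η ∈ A*`. -/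
noncomputable def Ur (R : A ⊗[k] A) : Submodule k A :=
  Submodule.span k {x : A | ∃ η : Module.Dual k A,
    x = TensorProduct.rid k A (TensorProduct.map LinearMap.id η R)}

end

/-- Image `R̃` of `R` in `A ⊗ Aᵒᵖ`. -/
noncomputable def legOp {k A : Type*} [CommSemiring k] [Semiring A] [Bialgebra k A]
    (R : A ⊗[k] A) : A ⊗[k] Aᵐᵒᵖ :=
  TensorProduct.map LinearMap.id (MulOpposite.opLinearEquiv k).toLinearMap R

/-- The would-be inverse `(id ⊗ S)(R)` of `R̃` in `A ⊗ Aᵒᵖ`. -/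
noncomputable def legOpS {k A : Type*} [CommSemiring k] [Semiring A] [HopfAlgebra k A]
    (R : A ⊗[k] A) : A ⊗[k] Aᵐᵒᵖ :=
  TensorProduct.map LinearMap.id
    ((MulOpposite.opLinearEquiv k).toLinearMap ∘ₗ HopfAlgebra.antipode (R := k)) R

set_option maxHeartbeats 1000000
set_option synthInstance.maxHeartbeats 200000
set_option linter.unusedSectionVars false

namespace Stmt15Aux

open TensorProduct MulOpposite

variable {k A : Type*} [Field k] [Ring A] [HopfAlgebra k A]

/-- op as a linear map. -/
noncomputable def opL : A →ₗ[k] Aᵐᵒᵖ := (opLinearEquiv k).toLinearMap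

@[simp] lemma opL_apply (a : A) : opL (k := k) a = op a := rfl

/-- The linear map `(x ⊗ y) ⊗ z ↦ (x ⊗ op z) ⊗ y`. -/
noncomputable def psi : ((A ⊗[k] A) ⊗[k] A) →ₗ[k] ((A ⊗[k] Aᵐᵒᵖ) ⊗[k] A) :=
  (TensorProduct.assoc k A Aᵐᵒᵖ A).symm.toLinearMap ∘ₗ
  (TensorProduct.map LinearMap.id
    ((TensorProduct.map opL LinearMap.id) ∘ₗ (TensorProduct.comm k A A).toLinearMap)) ∘ₗ
  (TensorProduct.assoc k A A A).toLinearMap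

@[simp] lemma psi_tmul (x y z : A) :
    psi ((x ⊗ₜ[k] y) ⊗ₜ[k] z) = (x ⊗ₜ[k] op z) ⊗ₜ[k] y := by
  simp [psi]

@[simp] lemma Tzero_mul (x : (A ⊗[k] Aᵐᵒᵖ) ⊗[k] A) : 0 * x = 0 := zero_mul x
@[simp] lemma Tmul_zero (x : (A ⊗[k] Aᵐᵒᵖ) ⊗[k] A) : x * 0 = 0 := mul_zero x
@[simp] lemma Tadd_mul (x y z : (A ⊗[k] Aᵐᵒᵖ) ⊗[k] A) :
    (x + y) * z = x * z + y * z := Distrib.right_distrib x y z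
@[simp] lemma Tmul_add (x y z : (A ⊗[k] Aᵐᵒᵖ) ⊗[k] A) :
    x * (y + z) = x * y + x * z := Distrib.left_distrib x y z
lemma Tone_mul (x : (A ⊗[k] Aᵐᵒᵖ) ⊗[k] A) : 1 * x = x := one_mul x
lemma Tmul_one (x : (A ⊗[k] Aᵐᵒᵖ) ⊗[k] A) : x * 1 = x := mul_one x
lemma Tmul_assoc (x y z : (A ⊗[k] Aᵐᵒᵖ) ⊗[k] A) : x * y * z = x * (y * z) := mul_assoc x y z

/-- `R ↦ R̃₁₂` into `(A ⊗ Aᵒᵖ) ⊗ A`. -/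
noncomputable def m12 : (A ⊗[k] A) →ₗ[k] ((A ⊗[k] Aᵐᵒᵖ) ⊗[k] A) :=
  ((TensorProduct.mk k (A ⊗[k] Aᵐᵒᵖ) A).flip 1) ∘ₗ (TensorProduct.map LinearMap.id opL)

@[simp] lemma m12_tmul (a b : A) :
    m12 (a ⊗ₜ[k] b) = (a ⊗ₜ[k] op b) ⊗ₜ[k] (1 : A) := rfl

lemma m12_eq (u : A ⊗[k] A) : m12 u = legOp (k := k) u ⊗ₜ[k] (1 : A) := rfl

/-- `R ↦ R₁₃` into `(A ⊗ Aᵒᵖ) ⊗ A`. -/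
noncomputable def m13 : (A ⊗[k] A) →ₗ[k] ((A ⊗[k] Aᵐᵒᵖ) ⊗[k] A) :=
  TensorProduct.map ((TensorProduct.mk k A Aᵐᵒᵖ).flip 1) LinearMap.id

@[simp] lemma m13_tmul (a b : A) :
    m13 (a ⊗ₜ[k] b) = (a ⊗ₜ[k] (1 : Aᵐᵒᵖ)) ⊗ₜ[k] b := rfl

/-- `R ↦ R̃₃₂` into `(A ⊗ Aᵒᵖ) ⊗ A`. -/
noncomputable def m32 : (A ⊗[k] A) →ₗ[k] ((A ⊗[k] Aᵐᵒᵖ) ⊗[k] A) :=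
  (TensorProduct.map ((TensorProduct.mk k A Aᵐᵒᵖ (1 : A)) ∘ₗ opL) LinearMap.id) ∘ₗ
    (TensorProduct.comm k A A).toLinearMap

@[simp] lemma m32_tmul (a b : A) :
    m32 (a ⊗ₜ[k] b) = ((1 : A) ⊗ₜ[k] op b) ⊗ₜ[k] a := by
  simp [m32]

@[simp] lemma leg12_zero : leg12 k (0 : A ⊗[k] A) = 0 := by
  simp [leg12, zero_tmul]

@[simp] lemma leg12_add (u v : A ⊗[k] A) : leg12 k (u + v) = leg12 k u + leg12 k v := by
  simp [leg12, add_tmul]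

@[simp] lemma leg13_zero : leg13 k (0 : A ⊗[k] A) = 0 := by
  simp [leg13]

@[simp] lemma leg13_add (u v : A ⊗[k] A) : leg13 k (u + v) = leg13 k u + leg13 k v := by
  simp [leg13]

@[simp] lemma leg13_tmul (a b : A) :
    leg13 k (a ⊗ₜ[k] b) = (a ⊗ₜ[k] (1 : A)) ⊗ₜ[k] b := by
  simp [leg13]

@[simp] lemma leg23_zero : leg23 k (0 : A ⊗[k] A) = 0 := by
  simp [leg23]

@[simp] lemma leg23_add (u v : A ⊗[k] A) : leg23 k (u + v) = leg23 k u + leg23 k v := by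
  simp [leg23]

@[simp] lemma leg23_tmul (a b : A) :
    leg23 k (a ⊗ₜ[k] b) = ((1 : A) ⊗ₜ[k] a) ⊗ₜ[k] b := by
  simp [leg23]

@[simp] lemma leg12_tmul (a b : A) :
    leg12 k (a ⊗ₜ[k] b) = (a ⊗ₜ[k] b) ⊗ₜ[k] (1 : A) := rfl

lemma key1 (u v w : A ⊗[k] A) :
    m12 u * m32 v * m13 w = psi (leg23 k v * leg13 k u * leg12 k w) := by
  induction u using TensorProduct.induction_on with
  | zero => simp [zero_mul, mul_zero]
  | add u1 u2 h1 h2 =>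
    simp only [map_add, leg12_add, leg13_add, leg23_add, Tadd_mul, Tmul_add,
      add_mul, mul_add, h1, h2]
  | tmul a b =>
    induction v using TensorProduct.induction_on with
    | zero => simp [zero_mul, mul_zero]
    | add v1 v2 h1 h2 =>
      simp only [map_add, leg12_add, leg13_add, leg23_add, Tadd_mul, Tmul_add,
        add_mul, mul_add, h1, h2]
    | tmul e f =>
      induction w using TensorProduct.induction_on with
      | zero => simp [zero_mul, mul_zero]
      | add w1 w2 h1 h2 =>
        simp only [map_add, leg12_add, leg13_add, leg23_add, Tadd_mul, Tmul_add,
          add_mul, mul_add, h1, h2]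
      | tmul c d => simp [Algebra.TensorProduct.tmul_mul_tmul]

lemma key2 (u v w : A ⊗[k] A) :
    m13 w * m32 v * m12 u = psi (leg12 k w * leg13 k u * leg23 k v) := by
  induction u using TensorProduct.induction_on with
  | zero => simp [zero_mul, mul_zero]
  | add u1 u2 h1 h2 =>
    simp only [map_add, leg12_add, leg13_add, leg23_add, Tadd_mul, Tmul_add,
      add_mul, mul_add, h1, h2]
  | tmul a b =>
    induction v using TensorProduct.induction_on with
    | zero => simp [zero_mul, mul_zero]
    | add v1 v2 h1 h2 =>
      simp only [map_add, leg12_add, leg13_add, leg23_add, Tadd_mul, Tmul_add,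
        add_mul, mul_add, h1, h2]
    | tmul e f =>
      induction w using TensorProduct.induction_on with
      | zero => simp [zero_mul, mul_zero]
      | add w1 w2 h1 h2 =>
        simp only [map_add, leg12_add, leg13_add, leg23_add, Tadd_mul, Tmul_add,
          add_mul, mul_add, h1, h2]
      | tmul c d => simp [Algebra.TensorProduct.tmul_mul_tmul]

set_option maxHeartbeats 1000000 in
/-- The conjugation identity. -/
lemma shift (R : (A ⊗[k] A)ˣ)
    (hYB : leg12 k (R : A ⊗[k] A) * leg13 k (R : A ⊗[k] A) * leg23 k (R : A ⊗[k] A) =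
        leg23 k (R : A ⊗[k] A) * leg13 k (R : A ⊗[k] A) * leg12 k (R : A ⊗[k] A))
    (hinv2 : legOpS (k := k) (R : A ⊗[k] A) * legOp (k := k) (R : A ⊗[k] A) = 1) :
    m32 (R : A ⊗[k] A) * m13 (R : A ⊗[k] A) =
      (legOpS (k := k) (R : A ⊗[k] A) ⊗ₜ[k] (1 : A)) *
        (m13 (R : A ⊗[k] A) * m32 (R : A ⊗[k] A)) *
        (legOp (k := k) (R : A ⊗[k] A) ⊗ₜ[k] (1 : A)) := by
  set Rm := (R : A ⊗[k] A)
  have hconj : m12 Rm * m32 Rm * m13 Rm = m13 Rm * m32 Rm * m12 Rm := by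
    rw [key1 Rm Rm Rm, key2 Rm Rm Rm, hYB]
  have hsr : (legOpS (k := k) Rm ⊗ₜ[k] (1 : A)) * m12 Rm = 1 := by
    rw [m12_eq, Algebra.TensorProduct.tmul_mul_tmul, hinv2, one_mul]
    exact (Algebra.TensorProduct.one_def).symm
  calc m32 Rm * m13 Rm
      = ((legOpS (k := k) Rm ⊗ₜ[k] (1 : A)) * m12 Rm) * (m32 Rm * m13 Rm) := by
        rw [hsr, Tone_mul]
    _ = (legOpS (k := k) Rm ⊗ₜ[k] (1 : A)) * (m12 Rm * m32 Rm * m13 Rm) := by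
        simp only [Tmul_assoc]
    _ = (legOpS (k := k) Rm ⊗ₜ[k] (1 : A)) * (m13 Rm * m32 Rm * m12 Rm) := by rw [hconj]
    _ = (legOpS (k := k) Rm ⊗ₜ[k] (1 : A)) * (m13 Rm * m32 Rm) *
          (legOp (k := k) Rm ⊗ₜ[k] (1 : A)) := by
        rw [← m12_eq]; simp only [Tmul_assoc]

/-- Slicing the first (A ⊗ Aᵒᵖ) factor with a functional. -/
noncomputable def sliceL (χ : Module.Dual k (A ⊗[k] Aᵐᵒᵖ)) :
    ((A ⊗[k] Aᵐᵒᵖ) ⊗[k] A) →ₗ[k] A :=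
  (TensorProduct.lid k A).toLinearMap ∘ₗ TensorProduct.map χ LinearMap.id

@[simp] lemma sliceL_tmul (χ : Module.Dual k (A ⊗[k] Aᵐᵒᵖ)) (x : A ⊗[k] Aᵐᵒᵖ) (m : A) :
    sliceL χ (x ⊗ₜ[k] m) = χ x • m := by
  simp [sliceL]

lemma sliceL_zero_left (t : (A ⊗[k] Aᵐᵒᵖ) ⊗[k] A) : sliceL 0 t = 0 := by
  induction t using TensorProduct.induction_on with
  | zero => exact map_zero _
  | add t1 t2 h1 h2 => rw [map_add, h1, h2, add_zero]
  | tmul x m => rw [sliceL_tmul, LinearMap.zero_apply, zero_smul]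

lemma sliceL_add_left (χ₁ χ₂ : Module.Dual k (A ⊗[k] Aᵐᵒᵖ)) (t : (A ⊗[k] Aᵐᵒᵖ) ⊗[k] A) :
    sliceL (χ₁ + χ₂) t = sliceL χ₁ t + sliceL χ₂ t := by
  induction t using TensorProduct.induction_on with
  | zero => rw [map_zero, map_zero, map_zero, add_zero]
  | add t1 t2 h1 h2 => rw [map_add, map_add, map_add, h1, h2]; abel
  | tmul x m => rw [sliceL_tmul, sliceL_tmul, sliceL_tmul, LinearMap.add_apply, add_smul]

/-- Pure functional `x ⊗ op y ↦ ω x * η y` on `A ⊗ Aᵒᵖ`. -/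
noncomputable def chi (ω η : Module.Dual k A) : Module.Dual k (A ⊗[k] Aᵐᵒᵖ) :=
  (TensorProduct.lid k k).toLinearMap ∘ₗ
    TensorProduct.map ω (η ∘ₗ (opLinearEquiv k).symm.toLinearMap)

@[simp] lemma chi_tmul (ω η : Module.Dual k A) (x : A) (y : Aᵐᵒᵖ) :
    chi ω η (x ⊗ₜ[k] y) = ω x * η (unop y) := by
  simp [chi, smul_eq_mul]

/-- Left-leg slice. -/
noncomputable def yl (ω : Module.Dual k A) (u : A ⊗[k] A) : A :=
  TensorProduct.lid k A (TensorProduct.map ω LinearMap.id u)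

/-- Right-leg slice. -/
noncomputable def xr (η : Module.Dual k A) (u : A ⊗[k] A) : A :=
  TensorProduct.rid k A (TensorProduct.map LinearMap.id η u)

@[simp] lemma yl_tmul (ω : Module.Dual k A) (a b : A) : yl ω (a ⊗ₜ[k] b) = ω a • b := by
  simp [yl]

@[simp] lemma xr_tmul (η : Module.Dual k A) (a b : A) : xr η (a ⊗ₜ[k] b) = η b • a := by
  simp [xr]

@[simp] lemma yl_zero (ω : Module.Dual k A) : yl ω (0 : A ⊗[k] A) = 0 := by simp [yl]

@[simp] lemma xr_zero (η : Module.Dual k A) : xr η (0 : A ⊗[k] A) = 0 := by simp [xr]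

@[simp] lemma yl_add (ω : Module.Dual k A) (u v : A ⊗[k] A) :
    yl ω (u + v) = yl ω u + yl ω v := by simp [yl]

@[simp] lemma xr_add (η : Module.Dual k A) (u v : A ⊗[k] A) :
    xr η (u + v) = xr η u + xr η v := by simp [xr]

lemma stepA (ω η : Module.Dual k A) (u v : A ⊗[k] A) :
    xr η u * yl ω v = sliceL (chi ω η) (m32 u * m13 v) := by
  induction u using TensorProduct.induction_on with
  | zero => simp [zero_mul, mul_zero]
  | add u1 u2 h1 h2 =>
    simp only [map_add, leg12_add, leg13_add, leg23_add, xr_add, yl_add, Tadd_mul, Tmul_add,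
      add_mul, mul_add, h1, h2]
  | tmul a b =>
    induction v using TensorProduct.induction_on with
    | zero => simp [zero_mul, mul_zero]
    | add v1 v2 h1 h2 =>
      simp only [map_add, leg12_add, leg13_add, leg23_add, xr_add, yl_add, Tadd_mul, Tmul_add,
        add_mul, mul_add, h1, h2]
    | tmul c d =>
      simp [Algebra.TensorProduct.tmul_mul_tmul, smul_mul_assoc, mul_smul_comm, smul_smul,
        mul_comm]

lemma stepC (ω η : Module.Dual k A) (u v : A ⊗[k] A) :
    sliceL (chi ω η) (m13 u * m32 v) = yl ω u * xr η v := by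
  induction u using TensorProduct.induction_on with
  | zero => simp [zero_mul, mul_zero]
  | add u1 u2 h1 h2 =>
    simp only [map_add, leg12_add, leg13_add, leg23_add, xr_add, yl_add, Tadd_mul, Tmul_add,
      add_mul, mul_add, h1, h2]
  | tmul c d =>
    induction v using TensorProduct.induction_on with
    | zero => simp [zero_mul, mul_zero]
    | add v1 v2 h1 h2 =>
      simp only [map_add, leg12_add, leg13_add, leg23_add, xr_add, yl_add, Tadd_mul, Tmul_add,
        add_mul, mul_add, h1, h2]
    | tmul a b =>
      simp [Algebra.TensorProduct.tmul_mul_tmul, smul_mul_assoc, mul_smul_comm, smul_smul,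
        mul_comm]

lemma stepB (x y : A ⊗[k] Aᵐᵒᵖ) (χ : Module.Dual k (A ⊗[k] Aᵐᵒᵖ))
    (t : (A ⊗[k] Aᵐᵒᵖ) ⊗[k] A) :
    sliceL χ ((x ⊗ₜ[k] (1 : A)) * t * (y ⊗ₜ[k] (1 : A))) =
      sliceL (χ ∘ₗ LinearMap.mulRight k y ∘ₗ LinearMap.mulLeft k x) t := by
  induction t using TensorProduct.induction_on with
  | zero => simp
  | add t1 t2 h1 h2 => simp only [map_add, Tadd_mul, Tmul_add, h1, h2]
  | tmul z m => simp [Algebra.TensorProduct.tmul_mul_tmul, mul_assoc]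

variable [FiniteDimensional k A]

lemma stepD (Rm : A ⊗[k] A) (χ : Module.Dual k (A ⊗[k] Aᵐᵒᵖ)) :
    sliceL χ (m13 Rm * m32 Rm) ∈ Ul k Rm * Ur k Rm := by
  obtain ⟨Φ, rfl⟩ : ∃ Φ, TensorProduct.dualDistrib k A Aᵐᵒᵖ Φ = χ := by
    refine ⟨(TensorProduct.dualDistribEquiv k A Aᵐᵒᵖ).symm χ, ?_⟩
    have h0 : ∀ Φ : Module.Dual k A ⊗[k] Module.Dual k Aᵐᵒᵖ,
        TensorProduct.dualDistrib k A Aᵐᵒᵖ Φ = TensorProduct.dualDistribEquiv k A Aᵐᵒᵖ Φ :=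
      fun Φ => rfl
    rw [h0, LinearEquiv.apply_symm_apply]
  induction Φ using TensorProduct.induction_on with
  | zero => rw [map_zero, sliceL_zero_left]; exact zero_mem _
  | add Φ1 Φ2 h1 h2 => rw [map_add, sliceL_add_left]; exact add_mem h1 h2
  | tmul ω η₀ =>
    have hchi : TensorProduct.dualDistrib k A Aᵐᵒᵖ (ω ⊗ₜ[k] η₀) =
        chi ω (η₀ ∘ₗ opL) := by
      apply TensorProduct.ext'
      intro x y
      simp
    rw [hchi, stepC]
    exact Submodule.mul_mem_mul (Submodule.subset_span ⟨ω, rfl⟩)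
      (Submodule.subset_span ⟨η₀ ∘ₗ opL, rfl⟩)

lemma keyMem (R : (A ⊗[k] A)ˣ)
    (hYB : leg12 k (R : A ⊗[k] A) * leg13 k (R : A ⊗[k] A) * leg23 k (R : A ⊗[k] A) =
        leg23 k (R : A ⊗[k] A) * leg13 k (R : A ⊗[k] A) * leg12 k (R : A ⊗[k] A))
    (hinv2 : legOpS (k := k) (R : A ⊗[k] A) * legOp (k := k) (R : A ⊗[k] A) = 1)
    (ω η : Module.Dual k A) :
    xr η (R : A ⊗[k] A) * yl ω (R : A ⊗[k] A) ∈
      Ul k (R : A ⊗[k] A) * Ur k (R : A ⊗[k] A) := by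
  rw [stepA, shift R hYB hinv2, stepB]
  exact stepD _ _


/-! ### Multiplicative closure of `Ul` and `Ur` -/

/-- Slicing the first `A ⊗ A` factor of `(A ⊗ A) ⊗ A` with a functional. -/
noncomputable def sliceP (χ : Module.Dual k (A ⊗[k] A)) : ((A ⊗[k] A) ⊗[k] A) →ₗ[k] A :=
  (TensorProduct.lid k A).toLinearMap ∘ₗ TensorProduct.map χ LinearMap.id

@[simp] lemma sliceP_tmul (χ : Module.Dual k (A ⊗[k] A)) (x : A ⊗[k] A) (m : A) :
    sliceP χ (x ⊗ₜ[k] m) = χ x • m := by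
  simp [sliceP]

/-- Pure functional `x ⊗ y ↦ ω x * η y` on `A ⊗ A`. -/
noncomputable def chi2 (ω η : Module.Dual k A) : Module.Dual k (A ⊗[k] A) :=
  (TensorProduct.lid k k).toLinearMap ∘ₗ TensorProduct.map ω η

@[simp] lemma chi2_tmul (ω η : Module.Dual k A) (x y : A) :
    chi2 ω η (x ⊗ₜ[k] y) = ω x * η y := by
  simp [chi2, smul_eq_mul]

lemma mulUl (ω η : Module.Dual k A) (u v : A ⊗[k] A) :
    sliceP (chi2 ω η) (leg13 k u * leg23 k v) = yl ω u * yl η v := by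
  induction u using TensorProduct.induction_on with
  | zero => simp [zero_mul, mul_zero]
  | add u1 u2 h1 h2 =>
    simp only [map_add, leg13_add, leg23_add, yl_add, add_mul, mul_add, h1, h2]
  | tmul a b =>
    induction v using TensorProduct.induction_on with
    | zero => simp [zero_mul, mul_zero]
    | add v1 v2 h1 h2 =>
      simp only [map_add, leg13_add, leg23_add, yl_add, add_mul, mul_add, h1, h2]
    | tmul e f =>
      simp [Algebra.TensorProduct.tmul_mul_tmul, smul_mul_assoc, mul_smul_comm, smul_smul,
        mul_comm]

lemma comulUl (ω η : Module.Dual k A) (u : A ⊗[k] A) :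
    sliceP (chi2 ω η) (Algebra.TensorProduct.map (Bialgebra.comulAlgHom k A) (AlgHom.id k A) u)
      = yl ((chi2 ω η) ∘ₗ (Coalgebra.comul (R := k))) u := by
  induction u using TensorProduct.induction_on with
  | zero => simp
  | add u1 u2 h1 h2 => simp only [map_add, yl_add, h1, h2]
  | tmul a b => simp [Algebra.TensorProduct.map_tmul]

/-- Slicing the second and third factors of `(A ⊗ A) ⊗ A` with functionals. -/
noncomputable def slice23 (η η' : Module.Dual k A) : ((A ⊗[k] A) ⊗[k] A) →ₗ[k] A :=
  (TensorProduct.rid k A).toLinearMap ∘ₗ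
    TensorProduct.map
      ((TensorProduct.rid k A).toLinearMap ∘ₗ TensorProduct.map LinearMap.id η) η'

@[simp] lemma slice23_tmul (η η' : Module.Dual k A) (x y z : A) :
    slice23 η η' ((x ⊗ₜ[k] y) ⊗ₜ[k] z) = η' z • η y • x := by
  simp [slice23]

lemma mulUr (η η' : Module.Dual k A) (u v : A ⊗[k] A) :
    slice23 η η' (leg13 k u * leg12 k v) = xr η' u * xr η v := by
  induction u using TensorProduct.induction_on with
  | zero => simp [zero_mul, mul_zero]
  | add u1 u2 h1 h2 =>
    simp only [map_add, leg13_add, leg12_add, xr_add, add_mul, mul_add, h1, h2]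
  | tmul c d =>
    induction v using TensorProduct.induction_on with
    | zero => simp [zero_mul, mul_zero]
    | add v1 v2 h1 h2 =>
      simp only [map_add, leg13_add, leg12_add, xr_add, add_mul, mul_add, h1, h2]
    | tmul a b =>
      simp [Algebra.TensorProduct.tmul_mul_tmul, smul_mul_assoc, mul_smul_comm, smul_smul,
        mul_comm]

lemma assocSymm_helper (η η' : Module.Dual k A) (a : A) (t : A ⊗[k] A) :
    slice23 η η' ((Algebra.TensorProduct.assoc k k k A A A).symm (a ⊗ₜ[k] t)) =
      (TensorProduct.lid k k) (TensorProduct.map η η' t) • a := by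
  induction t using TensorProduct.induction_on with
  | zero => simp
  | add t1 t2 h1 h2 => simp only [tmul_add, map_add, add_smul, h1, h2]
  | tmul y z =>
    simp [Algebra.TensorProduct.assoc_symm_tmul, smul_smul, mul_comm]

lemma comulUr (η η' : Module.Dual k A) (u : A ⊗[k] A) :
    slice23 η η' ((Algebra.TensorProduct.assoc k k k A A A).symm
      (Algebra.TensorProduct.map (AlgHom.id k A) (Bialgebra.comulAlgHom k A) u)) =
      xr ((TensorProduct.lid k k).toLinearMap ∘ₗ
        TensorProduct.map η η' ∘ₗ (Coalgebra.comul (R := k))) u := by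
  induction u using TensorProduct.induction_on with
  | zero => simp
  | add u1 u2 h1 h2 => simp only [map_add, xr_add, h1, h2]
  | tmul a b => simp [Algebra.TensorProduct.map_tmul, assocSymm_helper]

lemma Ul_sq (Rm : A ⊗[k] A)
    (hhex1 : Algebra.TensorProduct.map (Bialgebra.comulAlgHom k A) (AlgHom.id k A) Rm =
      leg13 k Rm * leg23 k Rm) :
    Ul k Rm * Ul k Rm ≤ Ul k Rm := by
  have gen : ∀ ω η : Module.Dual k A, yl ω Rm * yl η Rm ∈ Ul k Rm := by
    intro ω η
    have h : yl ω Rm * yl η Rm = yl ((chi2 ω η) ∘ₗ (Coalgebra.comul (R := k))) Rm := by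
      rw [← mulUl, ← hhex1, comulUl]
    exact Submodule.subset_span ⟨_, h⟩
  rw [Submodule.mul_le]
  intro x hx y hy
  induction hx using Submodule.span_induction with
  | mem x hxs =>
    induction hy using Submodule.span_induction with
    | mem y hys =>
      obtain ⟨ω, rfl⟩ := hxs
      obtain ⟨η, rfl⟩ := hys
      exact gen ω η
    | zero => rw [mul_zero]; exact zero_mem _
    | add a b ha hb ka kb => rw [mul_add]; exact add_mem ka kb
    | smul c a ha ka => rw [mul_smul_comm]; exact Submodule.smul_mem _ _ ka
  | zero => rw [zero_mul]; exact zero_mem _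
  | add a b ha hb ka kb => rw [add_mul]; exact add_mem ka kb
  | smul c a ha ka => rw [smul_mul_assoc]; exact Submodule.smul_mem _ _ ka

lemma Ur_sq (Rm : A ⊗[k] A)
    (hhex2 : (Algebra.TensorProduct.assoc k k k A A A).symm
        (Algebra.TensorProduct.map (AlgHom.id k A) (Bialgebra.comulAlgHom k A) Rm) =
      leg13 k Rm * leg12 k Rm) :
    Ur k Rm * Ur k Rm ≤ Ur k Rm := by
  have gen : ∀ η η' : Module.Dual k A, xr η' Rm * xr η Rm ∈ Ur k Rm := by
    intro η η'
    have h : xr η' Rm * xr η Rm = xr ((TensorProduct.lid k k).toLinearMap ∘ₗ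
        TensorProduct.map η η' ∘ₗ (Coalgebra.comul (R := k))) Rm := by
      rw [← mulUr, ← hhex2, comulUr]
    exact Submodule.subset_span ⟨_, h⟩
  rw [Submodule.mul_le]
  intro x hx y hy
  induction hx using Submodule.span_induction with
  | mem x hxs =>
    induction hy using Submodule.span_induction with
    | mem y hys =>
      obtain ⟨η', rfl⟩ := hxs
      obtain ⟨η, rfl⟩ := hys
      exact gen η η'
    | zero => rw [mul_zero]; exact zero_mem _
    | add a b ha hb ka kb => rw [mul_add]; exact add_mem ka kb
    | smul c a ha ka => rw [mul_smul_comm]; exact Submodule.smul_mem _ _ ka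
  | zero => rw [zero_mul]; exact zero_mem _
  | add a b ha hb ka kb => rw [add_mul]; exact add_mem ka kb
  | smul c a ha ka => rw [smul_mul_assoc]; exact Submodule.smul_mem _ _ ka

/-! ### Units -/

lemma Pmul_assoc (x y z : A ⊗[k] A) : x * y * z = x * (y * z) := mul_assoc x y z
lemma Pmul_one (x : A ⊗[k] A) : x * 1 = x := mul_one x

/-- `a ⊗ b ↦ ε(a) b` as an algebra map. -/
noncomputable def collapse1 : (A ⊗[k] A) →ₐ[k] A :=
  ((Algebra.TensorProduct.lid k A).toAlgHom).comp
    (Algebra.TensorProduct.map (Bialgebra.counitAlgHom k A) (AlgHom.id k A))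

lemma collapse1_apply (t : A ⊗[k] A) :
    collapse1 t = TensorProduct.lid k A
      (TensorProduct.map (Coalgebra.counit (R := k)) LinearMap.id t) := by
  induction t using TensorProduct.induction_on with
  | zero => simp
  | add t1 t2 h1 h2 => simp only [map_add, h1, h2]
  | tmul x y => simp [collapse1]

/-- `(x ⊗ y) ⊗ z ↦ ε(x) y ⊗ z` as an algebra map. -/
noncomputable def E1 : ((A ⊗[k] A) ⊗[k] A) →ₐ[k] (A ⊗[k] A) :=
  Algebra.TensorProduct.map collapse1 (AlgHom.id k A)

lemma E1_tmul (t : A ⊗[k] A) (b : A) : E1 (t ⊗ₜ[k] b) = collapse1 t ⊗ₜ[k] b := by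
  induction t using TensorProduct.induction_on with
  | zero => simp [zero_tmul]
  | add t1 t2 h1 h2 => simp only [add_tmul, map_add, h1, h2]
  | tmul x y => simp [E1]

lemma E1_leg23 (v : A ⊗[k] A) : E1 (leg23 k v) = v := by
  induction v using TensorProduct.induction_on with
  | zero => simp
  | add v1 v2 h1 h2 => simp only [leg23_add, map_add, h1, h2]
  | tmul a b => simp [E1_tmul, collapse1]

lemma E1_leg13 (v : A ⊗[k] A) :
    E1 (leg13 k v) = (1 : A) ⊗ₜ[k] yl (Coalgebra.counit (R := k)) v := by
  induction v using TensorProduct.induction_on with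
  | zero => simp
  | add v1 v2 h1 h2 => simp only [leg13_add, map_add, yl_add, tmul_add, h1, h2]
  | tmul a b =>
    simp [E1_tmul, collapse1, TensorProduct.smul_tmul', TensorProduct.tmul_smul]

lemma E1_comul (u : A ⊗[k] A) :
    E1 (Algebra.TensorProduct.map (Bialgebra.comulAlgHom k A) (AlgHom.id k A) u) = u := by
  induction u using TensorProduct.induction_on with
  | zero => simp
  | add u1 u2 h1 h2 => simp only [map_add, h1, h2]
  | tmul a b =>
    rw [Algebra.TensorProduct.map_tmul, E1_tmul, collapse1_apply]
    rw [Bialgebra.comulAlgHom_apply, AlgHom.coe_id, id_eq]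
    rw [show TensorProduct.map (Coalgebra.counit (R := k)) LinearMap.id
        (Coalgebra.comul a) = (1 : k) ⊗ₜ[k] a from Coalgebra.rTensor_counit_comul a]
    simp

lemma one_mem_Ul (R : (A ⊗[k] A)ˣ)
    (hhex1 : Algebra.TensorProduct.map (Bialgebra.comulAlgHom k A) (AlgHom.id k A)
        (R : A ⊗[k] A) = leg13 k (R : A ⊗[k] A) * leg23 k (R : A ⊗[k] A)) :
    (1 : A) ∈ Ul k (R : A ⊗[k] A) := by
  set u := yl (Coalgebra.counit (R := k)) (R : A ⊗[k] A) with hu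
  have hR : (R : A ⊗[k] A) = ((1 : A) ⊗ₜ[k] u) * (R : A ⊗[k] A) := by
    conv_lhs => rw [← E1_comul (R : A ⊗[k] A)]
    rw [hhex1, map_mul, E1_leg13, E1_leg23]
  have hru : (R : A ⊗[k] A) * ((R⁻¹ : (A ⊗[k] A)ˣ) : A ⊗[k] A) = 1 := R.mul_inv
  have h1 : ((1 : A) ⊗ₜ[k] u) = (1 : A ⊗[k] A) := by
    calc (1 : A) ⊗ₜ[k] u = ((1 : A) ⊗ₜ[k] u) * 1 := (Pmul_one _).symm
      _ = ((1 : A) ⊗ₜ[k] u) * ((R : A ⊗[k] A) * ((R⁻¹ : (A ⊗[k] A)ˣ) : A ⊗[k] A)) := by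
          rw [hru]
      _ = (((1 : A) ⊗ₜ[k] u) * (R : A ⊗[k] A)) * ((R⁻¹ : (A ⊗[k] A)ˣ) : A ⊗[k] A) :=
          (Pmul_assoc _ _ _).symm
      _ = (R : A ⊗[k] A) * ((R⁻¹ : (A ⊗[k] A)ˣ) : A ⊗[k] A) := by rw [← hR]
      _ = 1 := hru
  rw [Algebra.TensorProduct.one_def] at h1
  have h2 := congrArg (yl (Coalgebra.counit (R := k))) h1
  simp only [yl_tmul, Bialgebra.counit_one, one_smul] at h2
  exact Submodule.subset_span ⟨Coalgebra.counit, h2.symm⟩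

/-- `(x ⊗ y) ⊗ z ↦ ε(z) x ⊗ y` as an algebra map. -/
noncomputable def E2 : ((A ⊗[k] A) ⊗[k] A) →ₐ[k] (A ⊗[k] A) :=
  ((Algebra.TensorProduct.rid k k (A ⊗[k] A)).toAlgHom).comp
    (Algebra.TensorProduct.map (AlgHom.id k (A ⊗[k] A)) (Bialgebra.counitAlgHom k A))

lemma E2_tmul (t : A ⊗[k] A) (z : A) :
    E2 (t ⊗ₜ[k] z) = Coalgebra.counit (R := k) z • t := by
  induction t using TensorProduct.induction_on with
  | zero => simp [zero_tmul]
  | add t1 t2 h1 h2 => simp only [add_tmul, map_add, smul_add, h1, h2]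
  | tmul x y => simp [E2]

lemma E2_leg12 (v : A ⊗[k] A) : E2 (leg12 k v) = v := by
  rw [leg12, E2_tmul, Bialgebra.counit_one, one_smul]

lemma E2_leg13 (v : A ⊗[k] A) :
    E2 (leg13 k v) = xr (Coalgebra.counit (R := k)) v ⊗ₜ[k] (1 : A) := by
  induction v using TensorProduct.induction_on with
  | zero => simp
  | add v1 v2 h1 h2 => simp only [leg13_add, map_add, xr_add, add_tmul, h1, h2]
  | tmul c d =>
    rw [leg13_tmul, E2_tmul, xr_tmul, TensorProduct.smul_tmul']

lemma E2_assoc_helper (a : A) (t : A ⊗[k] A) :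
    E2 ((Algebra.TensorProduct.assoc k k k A A A).symm (a ⊗ₜ[k] t)) =
      a ⊗ₜ[k] (TensorProduct.rid k A)
        ((LinearMap.lTensor A (Coalgebra.counit (R := k))) t) := by
  induction t using TensorProduct.induction_on with
  | zero => simp
  | add t1 t2 h1 h2 => simp only [tmul_add, map_add, h1, h2]
  | tmul y z =>
    rw [Algebra.TensorProduct.assoc_symm_tmul, E2_tmul]
    simp [TensorProduct.tmul_smul]

lemma E2_comul (u : A ⊗[k] A) :
    E2 ((Algebra.TensorProduct.assoc k k k A A A).symm
      (Algebra.TensorProduct.map (AlgHom.id k A) (Bialgebra.comulAlgHom k A) u)) = u := by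
  induction u using TensorProduct.induction_on with
  | zero => simp
  | add u1 u2 h1 h2 => simp only [map_add, h1, h2]
  | tmul a b =>
    rw [Algebra.TensorProduct.map_tmul, AlgHom.coe_id, id_eq, Bialgebra.comulAlgHom_apply,
      E2_assoc_helper]
    rw [show (LinearMap.lTensor A (Coalgebra.counit (R := k))) (Coalgebra.comul b) =
        b ⊗ₜ[k] (1 : k) from Coalgebra.lTensor_counit_comul b]
    simp

lemma one_mem_Ur (R : (A ⊗[k] A)ˣ)
    (hhex2 : (Algebra.TensorProduct.assoc k k k A A A).symm
        (Algebra.TensorProduct.map (AlgHom.id k A) (Bialgebra.comulAlgHom k A)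
          (R : A ⊗[k] A)) = leg13 k (R : A ⊗[k] A) * leg12 k (R : A ⊗[k] A)) :
    (1 : A) ∈ Ur k (R : A ⊗[k] A) := by
  set v := xr (Coalgebra.counit (R := k)) (R : A ⊗[k] A) with hv
  have hR : (R : A ⊗[k] A) = (v ⊗ₜ[k] (1 : A)) * (R : A ⊗[k] A) := by
    conv_lhs => rw [← E2_comul (R : A ⊗[k] A)]
    rw [hhex2, map_mul, E2_leg13, E2_leg12]
  have hru : (R : A ⊗[k] A) * ((R⁻¹ : (A ⊗[k] A)ˣ) : A ⊗[k] A) = 1 := R.mul_inv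
  have h1 : (v ⊗ₜ[k] (1 : A)) = (1 : A ⊗[k] A) := by
    calc v ⊗ₜ[k] (1 : A) = (v ⊗ₜ[k] (1 : A)) * 1 := (Pmul_one _).symm
      _ = (v ⊗ₜ[k] (1 : A)) * ((R : A ⊗[k] A) * ((R⁻¹ : (A ⊗[k] A)ˣ) : A ⊗[k] A)) := by
          rw [hru]
      _ = ((v ⊗ₜ[k] (1 : A)) * (R : A ⊗[k] A)) * ((R⁻¹ : (A ⊗[k] A)ˣ) : A ⊗[k] A) :=
          (Pmul_assoc _ _ _).symm
      _ = (R : A ⊗[k] A) * ((R⁻¹ : (A ⊗[k] A)ˣ) : A ⊗[k] A) := by rw [← hR]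
      _ = 1 := hru
  rw [Algebra.TensorProduct.one_def] at h1
  have h2 := congrArg (xr (Coalgebra.counit (R := k))) h1
  simp only [xr_tmul, Bialgebra.counit_one, one_smul] at h2
  exact Submodule.subset_span ⟨Coalgebra.counit, h2.symm⟩

end Stmt15Aux

/-- In a finite-dimensional quasitriangular Hopf algebra, if the `R`-matrix satisfies the
Yang–Baxter equation and `(id ⊗ S)(R)` is a two-sided inverse of `R` in `A ⊗ Aᵒᵖ`, then
`U_r U_l ⊆ U_l U_r`; hence `U_R = U_l U_r` is a (unital) subalgebra of `A`. -/
theorem stmt_15 {k A : Type*} [Field k] [Ring A] [HopfAlgebra k A] [FiniteDimensional k A]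
    (R : (A ⊗[k] A)ˣ)
    (hqt : ∀ a : A, (TensorProduct.comm k A A) (Bialgebra.comulAlgHom k A a) =
        (R : A ⊗[k] A) * Bialgebra.comulAlgHom k A a * ((R⁻¹ : (A ⊗[k] A)ˣ) : A ⊗[k] A))
    (hhex1 : Algebra.TensorProduct.map (Bialgebra.comulAlgHom k A) (AlgHom.id k A)
        (R : A ⊗[k] A) = leg13 k (R : A ⊗[k] A) * leg23 k (R : A ⊗[k] A))
    (hhex2 : (Algebra.TensorProduct.assoc k k k A A A).symm
        (Algebra.TensorProduct.map (AlgHom.id k A) (Bialgebra.comulAlgHom k A)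
          (R : A ⊗[k] A)) = leg13 k (R : A ⊗[k] A) * leg12 k (R : A ⊗[k] A))
    (hYB : leg12 k (R : A ⊗[k] A) * leg13 k (R : A ⊗[k] A) * leg23 k (R : A ⊗[k] A) =
        leg23 k (R : A ⊗[k] A) * leg13 k (R : A ⊗[k] A) * leg12 k (R : A ⊗[k] A))
    (hinv1 : legOp (k := k) (R : A ⊗[k] A) * legOpS (k := k) (R : A ⊗[k] A) = 1)
    (hinv2 : legOpS (k := k) (R : A ⊗[k] A) * legOp (k := k) (R : A ⊗[k] A) = 1) :
    Ur k (R : A ⊗[k] A) * Ul k (R : A ⊗[k] A) ≤ Ul k (R : A ⊗[k] A) * Ur k (R : A ⊗[k] A) ∧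
    (Ul k (R : A ⊗[k] A) * Ur k (R : A ⊗[k] A)) * (Ul k (R : A ⊗[k] A) * Ur k (R : A ⊗[k] A)) ≤
      Ul k (R : A ⊗[k] A) * Ur k (R : A ⊗[k] A) ∧
    (1 : A) ∈ Ul k (R : A ⊗[k] A) * Ur k (R : A ⊗[k] A) := by
  classical
  have p1 : Ur k (R : A ⊗[k] A) * Ul k (R : A ⊗[k] A) ≤
      Ul k (R : A ⊗[k] A) * Ur k (R : A ⊗[k] A) := by
    rw [Submodule.mul_le]
    intro x hx y hy
    induction hx using Submodule.span_induction with
    | mem x hxs =>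
      induction hy using Submodule.span_induction with
      | mem y hys =>
        obtain ⟨η, rfl⟩ := hxs
        obtain ⟨ω, rfl⟩ := hys
        exact Stmt15Aux.keyMem R hYB hinv2 ω η
      | zero => rw [mul_zero]; exact zero_mem _
      | add a b ha hb ka kb => rw [mul_add]; exact add_mem ka kb
      | smul c a ha ka => rw [mul_smul_comm]; exact Submodule.smul_mem _ _ ka
    | zero => rw [zero_mul]; exact zero_mem _
    | add a b ha hb ka kb => rw [add_mul]; exact add_mem ka kb
    | smul c a ha ka => rw [smul_mul_assoc]; exact Submodule.smul_mem _ _ ka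
  have hUl : Ul k (R : A ⊗[k] A) * Ul k (R : A ⊗[k] A) ≤ Ul k (R : A ⊗[k] A) :=
    Stmt15Aux.Ul_sq _ hhex1
  have hUr : Ur k (R : A ⊗[k] A) * Ur k (R : A ⊗[k] A) ≤ Ur k (R : A ⊗[k] A) :=
    Stmt15Aux.Ur_sq _ hhex2
  refine ⟨p1, ?_, ?_⟩
  · set L := Ul k (R : A ⊗[k] A)
    set Rr := Ur k (R : A ⊗[k] A)
    calc (L * Rr) * (L * Rr) = (L * (Rr * L)) * Rr := by
          simp only [mul_assoc]
      _ ≤ (L * (L * Rr)) * Rr := mul_le_mul'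
          (mul_le_mul' le_rfl p1) le_rfl
      _ = (L * L) * (Rr * Rr) := by simp only [mul_assoc]
      _ ≤ L * Rr := mul_le_mul' hUl hUr
  · have h1 := Stmt15Aux.one_mem_Ul R hhex1
    have h2 := Stmt15Aux.one_mem_Ur R hhex2
    have := Submodule.mul_mem_mul h1 h2
    simpa using this
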